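/- Let C be a normal cone with nonempty interior in a Banach space, and h : C → C continuous, positively homogeneous, and order-preserving. If x ∈ int C and λ > 0 satisfy h(x) ≤ λ x, then for every y ∈ C, limsup_k ‖h^k(y)‖^{1/k} ≤ λ. Hence the cone spectral radius r_C(h) = sup_{y∈C} limsup_k ‖h^k(y)‖^{1/k} satisfies r_C(h) ≤ cw(h) := inf{λ > 0 : ∃x ∈ int C, h(x) ≤ λx}. -/

import Mathlib

open Set Filter

/-- The Collatz-Wielandt number `cw(f) = inf {λ > 0 : ∃ x ∈ int C, f(x) ≤ λ x}`. -/
noncomputable def collatzWielandt {X : Type*} [NormedAddCommGroup X] [NormedSpace ℝ X]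
    (C : Set X) (f : X → X) : ENNReal :=
  ⨅ (l : ℝ) (_ : 0 < l ∧ ∃ x ∈ interior C, l • x - f x ∈ C), ENNReal.ofReal l

/-- The cone spectral radius `r_C(h) = sup_{x ∈ C} limsup_k ‖h^k(x)‖^{1/k}`. -/
noncomputable def coneSpectralRadius {X : Type*} [NormedAddCommGroup X]
    (C : Set X) (h : X → X) : ENNReal :=
  ⨆ (x : X) (_ : x ∈ C),
    Filter.limsup (fun k : ℕ => ENNReal.ofReal (‖h^[k] x‖ ^ ((k : ℝ)⁻¹))) atTop

theorem spectral_radius_le_collatzWielandt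
    {X : Type*} [NormedAddCommGroup X] [NormedSpace ℝ X] [CompleteSpace X]
    (C : Set X)
    (hclosed : IsClosed C) (hconv : Convex ℝ C)
    (hcone : ∀ t : ℝ, 0 ≤ t → ∀ x ∈ C, t • x ∈ C)
    (hpointed : ∀ x ∈ C, -x ∈ C → x = 0)
    (hint : (interior C).Nonempty)
    (M : ℝ) (hM : 0 < M)
    (hnormal : ∀ x y : X, x ∈ C → y - x ∈ C → ‖x‖ ≤ M * ‖y‖)
    (h : X → X) (hmaps : MapsTo h C C) (hcont : ContinuousOn h C)
    (hhom : ∀ t : ℝ, 0 < t → ∀ x ∈ C, h (t • x) = t • h x)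
    (hmono : ∀ x ∈ C, ∀ y ∈ C, y - x ∈ C → h y - h x ∈ C) :
    (∀ x ∈ interior C, ∀ l : ℝ, 0 < l → l • x - h x ∈ C →
      ∀ y ∈ C, Filter.limsup (fun k : ℕ => ENNReal.ofReal (‖h^[k] y‖ ^ ((k : ℝ)⁻¹))) atTop
        ≤ ENNReal.ofReal l) ∧
    coneSpectralRadius C h ≤ collatzWielandt C h := by
  have hadd : ∀ u ∈ C, ∀ v ∈ C, u + v ∈ C := by
    intro u hu v hv
    have := hconv hu hv (by norm_num : (0:ℝ) ≤ 1/2) (by norm_num : (0:ℝ) ≤ 1/2) (by norm_num)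
    have h2 := hcone 2 (by norm_num) _ this
    have : (2:ℝ) • ((1/2 : ℝ) • u + (1/2 : ℝ) • v) = u + v := by
      rw [smul_add, smul_smul, smul_smul]; norm_num
    rwa [this] at h2
  have main : ∀ x ∈ interior C, ∀ l : ℝ, 0 < l → l • x - h x ∈ C →
      ∀ y ∈ C, Filter.limsup (fun k : ℕ => ENNReal.ofReal (‖h^[k] y‖ ^ ((k : ℝ)⁻¹))) atTop
        ≤ ENNReal.ofReal l := by
    intro x hx l hl hxl y hy
    have hxC : x ∈ C := interior_subset hx
    -- find b > 0 with b • x - y ∈ C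
    obtain ⟨ε, hε, hball⟩ := Metric.mem_nhds_iff.mp (mem_interior_iff_mem_nhds.mp hx)
    set b : ℝ := (‖y‖ + 1) / ε with hb_def
    have hb : 0 < b := div_pos (by positivity) hε
    have hby : b • x - y ∈ C := by
      have hmem : x - b⁻¹ • y ∈ Metric.ball x ε := by
        rw [Metric.mem_ball, dist_eq_norm]
        have : x - b⁻¹ • y - x = -(b⁻¹ • y) := by abel
        rw [this, norm_neg, norm_smul, Real.norm_eq_abs, abs_of_pos (inv_pos.mpr hb)]
        rw [hb_def, inv_div]
        rw [div_mul_eq_mul_div, div_lt_iff₀ (by positivity)]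
        nlinarith [norm_nonneg y]
      have := hcone b hb.le _ (hball hmem)
      rwa [smul_sub, smul_inv_smul₀ hb.ne'] at this
    -- induction: (b * l^k) • x - h^[k] y ∈ C
    have key : ∀ k : ℕ, (b * l ^ k) • x - h^[k] y ∈ C := by
      intro k
      induction k with
      | zero => simpa using hby
      | succ k ih =>
        have hzC : h^[k] y ∈ C := hmaps.iterate k hy
        have hwC : (b * l ^ k) • x ∈ C := hcone _ (by positivity) _ hxC
        have hmono' := hmono _ hzC _ hwC ih
        rw [hhom _ (by positivity) _ hxC] at hmono'
        have hsc : (b * l ^ k) • (l • x - h x) ∈ C := hcone _ (by positivity) _ hxl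
        have := hadd _ hsc _ hmono'
        have heq : (b * l ^ k) • (l • x - h x) + ((b * l ^ k) • h x - h (h^[k] y))
            = (b * l ^ (k + 1)) • x - h (h^[k] y) := by
          rw [smul_sub, smul_smul]
          ring_nf
          module
        rw [heq] at this
        simpa [Function.iterate_succ_apply'] using this
    have hnorm : ∀ k : ℕ, ‖h^[k] y‖ ≤ M * b * ‖x‖ * l ^ k := by
      intro k
      have := hnormal _ _ (hmaps.iterate k hy) (key k)
      rw [norm_smul, Real.norm_eq_abs, abs_of_pos (by positivity)] at this
      calc ‖h^[k] y‖ ≤ M * (b * l ^ k * ‖x‖) := this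
        _ = M * b * ‖x‖ * l ^ k := by ring
    set A : ℝ := M * b * ‖x‖ with hA_def
    have hA : 0 ≤ A := by positivity
    rcases eq_or_lt_of_le hA with hA0 | hApos
    · -- A = 0 : the iterates are eventually 0
      apply Filter.limsup_le_of_le
      · isBoundedDefault
      · filter_upwards [Filter.eventually_ge_atTop 1] with k hk
        have h0 : ‖h^[k] y‖ = 0 := le_antisymm (by
          have := hnorm k; nlinarith [pow_pos hl k]) (norm_nonneg _)
        rw [h0, Real.zero_rpow (by positivity : ((k:ℝ)⁻¹) ≠ 0)]
        simp
    · -- A > 0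
      have htend : Filter.Tendsto (fun k : ℕ => ENNReal.ofReal (A ^ ((k : ℝ)⁻¹) * l))
          atTop (nhds (ENNReal.ofReal l)) := by
        have h1 : Filter.Tendsto (fun k : ℕ => A ^ ((k : ℝ)⁻¹)) atTop (nhds 1) := by
          have heq : ∀ k : ℕ, A ^ ((k : ℝ)⁻¹) = Real.exp (Real.log A * (k : ℝ)⁻¹) := by
            intro k
            rw [Real.rpow_def_of_pos hApos, mul_comm]
          simp_rw [heq]
          have hinv : Filter.Tendsto (fun k : ℕ => ((k : ℝ))⁻¹) atTop (nhds 0) :=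
            tendsto_inv_atTop_zero.comp tendsto_natCast_atTop_atTop
          have : Filter.Tendsto (fun k : ℕ => Real.log A * (k : ℝ)⁻¹) atTop (nhds 0) := by
            have := hinv.const_mul (Real.log A)
            simpa using this
          simpa [Function.comp_def] using (Real.continuous_exp.tendsto 0).comp this
        have h2 := h1.mul_const l
        rw [one_mul] at h2
        exact (ENNReal.continuous_ofReal.tendsto l).comp h2
      calc Filter.limsup (fun k : ℕ => ENNReal.ofReal (‖h^[k] y‖ ^ ((k : ℝ)⁻¹))) atTop
          ≤ Filter.limsup (fun k : ℕ => ENNReal.ofReal (A ^ ((k : ℝ)⁻¹) * l)) atTop := by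
            apply Filter.limsup_le_limsup _ (by isBoundedDefault) (by isBoundedDefault)
            filter_upwards [Filter.eventually_ge_atTop 1] with k hk
            apply ENNReal.ofReal_le_ofReal
            have hk0 : (k : ℝ) ≠ 0 := by positivity
            have step1 : ‖h^[k] y‖ ^ ((k : ℝ)⁻¹) ≤ (A * l ^ k) ^ ((k : ℝ)⁻¹) := by
              apply Real.rpow_le_rpow (norm_nonneg _) _ (by positivity)
              have := hnorm k; linarith
            have step2 : (A * l ^ k) ^ ((k : ℝ)⁻¹) = A ^ ((k : ℝ)⁻¹) * l := by
              rw [Real.mul_rpow hApos.le (by positivity)]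
              congr 1
              rw [← Real.rpow_natCast l k, ← Real.rpow_mul hl.le,
                mul_inv_cancel₀ hk0, Real.rpow_one]
            linarith [step1, step2.le, step2.ge]
        _ = ENNReal.ofReal l := htend.limsup_eq
  refine ⟨main, ?_⟩
  unfold coneSpectralRadius collatzWielandt
  apply le_iInf₂
  intro l ⟨hl, x, hx, hxl⟩
  apply iSup₂_le
  intro y hy
  exact main x hx l hl hxl y hy
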